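/- Let n, d, q ≥ 1, let D, F, G : Fin n → ℝ with S_F := ∑_i F_i ≠ 0, let y : Fin n → ℝ^q and u : Fin n → ℝ^{1+d}. Set s := ∑_i G_i u_i ∈ ℝ^{1+d}, define the (1+d)×(1+d) matrix M := ∑_i D_i u_i u_iᵀ − (1/S_F) s sᵀ and the q×(1+d) matrix R := ∑_i D_i y_i u_iᵀ − (1/S_F) (∑_k G_k y_k) sᵀ. Suppose β is a (1+d)×q matrix satisfying Mᵀ β = Rᵀ, and define α := (1/S_F) ∑_i G_i (y_i − βᵀ u_i) ∈ ℝ^q. Then the stationarity equation ∑_i D_i (y_i − βᵀ u_i) u_iᵀ = ∑_i G_i · α u_iᵀ holds. In particular, if M is invertible, β := (Mᵀ)^{-1} Rᵀ together with the corresponding α satisfies this equation. (This is the derivation, in the appendix, of the closed-form update for the regression coefficient matrix β_g in the first CM-step of the ECM algorithm, obtained by substituting the closed-form of α_{Y|g} into the β-stationarity equation.) -/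
import Mathlib

open scoped BigOperators Matrix

private lemma vmv_mulVec {m n p : Type*} [Fintype n] (A : Matrix m n ℝ) (v : n → ℝ) (w : p → ℝ) :
    Matrix.vecMulVec (A.mulVec v) w = A * Matrix.vecMulVec v w := by
  ext j k
  simp [Matrix.vecMulVec_apply, Matrix.mul_apply, Matrix.mulVec, dotProduct,
    Finset.sum_mul, mul_assoc]

private lemma mulVec_sum' {m n ι : Type*} [Fintype n] [Fintype ι] (A : Matrix m n ℝ)
    (G : ι → ℝ) (u : ι → n → ℝ) :
    A.mulVec (∑ i, G i • u i) = ∑ i, G i • A.mulVec (u i) := by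
  ext j
  simp [Matrix.mulVec, dotProduct, Finset.sum_apply, Finset.mul_sum]
  rw [Finset.sum_comm]
  simp [mul_left_comm]

private lemma vmv_sub {m p : Type*} (a b : m → ℝ) (w : p → ℝ) :
    Matrix.vecMulVec (a - b) w = Matrix.vecMulVec a w - Matrix.vecMulVec b w := by
  ext j k; simp [Matrix.vecMulVec_apply, sub_mul]

private lemma vmv_smul {m p : Type*} (c : ℝ) (a : m → ℝ) (w : p → ℝ) :
    Matrix.vecMulVec (c • a) w = c • Matrix.vecMulVec a w := by
  ext j k; simp [Matrix.vecMulVec_apply, mul_assoc]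

private lemma sum_vmv {m p ι : Type*} [Fintype ι] (G : ι → ℝ) (c : m → ℝ) (u : ι → p → ℝ) :
    ∑ i, G i • Matrix.vecMulVec c (u i) = Matrix.vecMulVec c (∑ i, G i • u i) := by
  ext j k
  simp [Matrix.vecMulVec_apply, Matrix.sum_apply, Finset.sum_apply, Finset.mul_sum, mul_left_comm, mul_comm]

/-- Closed-form update for the regression coefficient matrix `β` in the first
CM-step of the ECM algorithm: if `Mᵀ β = Rᵀ` and `α` is the corresponding
skewness update, then the stationarity equation
`∑ i, D i • (y i − βᵀ u i) u iᵀ = ∑ i, G i • α u iᵀ` holds; in particular, if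
`M` is invertible, `β = (Mᵀ)⁻¹ Rᵀ` together with its `α` satisfies it. -/
theorem cm_step_beta_update
    (n d q : ℕ) (hn : 1 ≤ n) (hd : 1 ≤ d) (hq : 1 ≤ q)
    (D F G : Fin n → ℝ) (hF : (∑ i, F i) ≠ 0)
    (y : Fin n → (Fin q → ℝ)) (u : Fin n → (Fin (1 + d) → ℝ))
    (s : Fin (1 + d) → ℝ) (hs : s = ∑ i, G i • u i)
    (M : Matrix (Fin (1 + d)) (Fin (1 + d)) ℝ)
    (hM : M = ∑ i, D i • Matrix.vecMulVec (u i) (u i)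
      - (∑ i, F i)⁻¹ • Matrix.vecMulVec s s)
    (R : Matrix (Fin q) (Fin (1 + d)) ℝ)
    (hR : R = ∑ i, D i • Matrix.vecMulVec (y i) (u i)
      - (∑ i, F i)⁻¹ • Matrix.vecMulVec (∑ k, G k • y k) s) :
    (∀ (β : Matrix (Fin (1 + d)) (Fin q) ℝ), Mᵀ * β = Rᵀ →
      ∀ (α : Fin q → ℝ),
        α = (∑ i, F i)⁻¹ • ∑ i, G i • (y i - Matrix.mulVec βᵀ (u i)) →
        (∑ i, D i • Matrix.vecMulVec (y i - Matrix.mulVec βᵀ (u i)) (u i))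
          = ∑ i, G i • Matrix.vecMulVec α (u i)) ∧
    (IsUnit M.det →
      (∑ i, D i • Matrix.vecMulVec
          (y i - Matrix.mulVec ((Mᵀ)⁻¹ * Rᵀ)ᵀ (u i)) (u i))
        = ∑ i, G i • Matrix.vecMulVec
            ((∑ i, F i)⁻¹ •
              ∑ i, G i • (y i - Matrix.mulVec ((Mᵀ)⁻¹ * Rᵀ)ᵀ (u i))) (u i)) := by
  have main : ∀ (β : Matrix (Fin (1 + d)) (Fin q) ℝ), Mᵀ * β = Rᵀ →
      ∀ (α : Fin q → ℝ),
        α = (∑ i, F i)⁻¹ • ∑ i, G i • (y i - Matrix.mulVec βᵀ (u i)) →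
        (∑ i, D i • Matrix.vecMulVec (y i - Matrix.mulVec βᵀ (u i)) (u i))
          = ∑ i, G i • Matrix.vecMulVec α (u i) := by
    intro β hβ α hα
    have hβ' : βᵀ * M = R := by
      have := congrArg Matrix.transpose hβ
      simpa [Matrix.transpose_mul] using this
    -- rewrite LHS
    have L1 : (∑ i, D i • Matrix.vecMulVec (y i - Matrix.mulVec βᵀ (u i)) (u i))
        = (∑ i, D i • Matrix.vecMulVec (y i) (u i))
          - βᵀ * (∑ i, D i • Matrix.vecMulVec (u i) (u i)) := by
      rw [Matrix.mul_sum, ← Finset.sum_sub_distrib]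
      refine Finset.sum_congr rfl fun i _ => ?_
      rw [vmv_sub, smul_sub, vmv_mulVec, Matrix.mul_smul]
    have hT : (∑ i, D i • Matrix.vecMulVec (u i) (u i))
        = M + (∑ i, F i)⁻¹ • Matrix.vecMulVec s s := by
      rw [hM]; ring_nf; abel
    have hY : (∑ i, D i • Matrix.vecMulVec (y i) (u i))
        = R + (∑ i, F i)⁻¹ • Matrix.vecMulVec (∑ k, G k • y k) s := by
      rw [hR]; abel
    have hαs : α = (∑ i, F i)⁻¹ • ((∑ k, G k • y k) - Matrix.mulVec βᵀ s) := by
      rw [hα, hs, mulVec_sum', ← Finset.sum_sub_distrib]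
      congr 1
      refine Finset.sum_congr rfl fun i _ => ?_
      rw [smul_sub]
    calc (∑ i, D i • Matrix.vecMulVec (y i - Matrix.mulVec βᵀ (u i)) (u i))
        = (∑ i, D i • Matrix.vecMulVec (y i) (u i))
          - βᵀ * (∑ i, D i • Matrix.vecMulVec (u i) (u i)) := L1
      _ = R + (∑ i, F i)⁻¹ • Matrix.vecMulVec (∑ k, G k • y k) s
          - (βᵀ * M + (∑ i, F i)⁻¹ • (βᵀ * Matrix.vecMulVec s s)) := by
            rw [hT, hY, Matrix.mul_add, Matrix.mul_smul]
      _ = (∑ i, F i)⁻¹ • Matrix.vecMulVec (∑ k, G k • y k) s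
          - (∑ i, F i)⁻¹ • (βᵀ * Matrix.vecMulVec s s) := by rw [hβ']; abel
      _ = Matrix.vecMulVec α s := by
            rw [← vmv_mulVec, hαs, vmv_smul, vmv_sub, smul_sub]
      _ = ∑ i, G i • Matrix.vecMulVec α (u i) := by rw [sum_vmv, ← hs]
  refine ⟨main, fun hdet => ?_⟩
  have hdet' : IsUnit (Mᵀ).det := by simpa [Matrix.det_transpose] using hdet
  exact main _ (by rw [← Matrix.mul_assoc, Matrix.mul_nonsing_inv _ hdet', Matrix.one_mul]) _ rfl
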